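/- Let Γ⁰ be a subgroup of Γ, let Z ⊆ B be a ℂ-subalgebra such that v(z) ∈ Γ⁰ for every nonzero z ∈ Z, and let x₁, …, x_R ∈ B be nonzero elements such that for i ≠ j the elements v(xᵢ) and v(xⱼ) lie in distinct cosets of Γ⁰ in Γ. Then x₁, …, x_R are left linearly independent over Z: whenever z₁, …, z_R ∈ Z satisfy z₁ * x₁ + ⋯ + z_R * x_R = 0, one has zᵢ = 0 for all i. -/

import Mathlib

/-- The valuation (leading exponent) of an element of an algebra `B` that is free as a
`ℂ`-module with basis indexed by a linearly ordered group `Γ`: the maximum of the support of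
the basis expansion, with value `⊥` exactly on `x = 0`. -/
noncomputable def val {Γ B : Type*} [AddCommGroup Γ] [LinearOrder Γ] [IsOrderedAddMonoid Γ] [Ring B] [Algebra ℂ B]
    (Zb : Module.Basis Γ ℂ B) (x : B) : WithBot Γ :=
  (Zb.repr x).support.max

section aux
variable {Γ B : Type*} [AddCommGroup Γ] [LinearOrder Γ] [IsOrderedAddMonoid Γ] [Ring B] [Algebra ℂ B] (Zb : Module.Basis Γ ℂ B)

lemma val_ne_bot_of_ne_zero {x : B} (hx : x ≠ 0) : val Zb x ≠ ⊥ := by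
  intro h
  have h1 : (Zb.repr x).support = ∅ := Finset.max_eq_bot.mp h
  have h2 : Zb.repr x = 0 := Finsupp.support_eq_empty.mp h1
  exact hx (by simpa using (LinearEquiv.map_eq_zero_iff Zb.repr).mp h2)

lemma le_val_of_mem_support {x : B} {m : Γ} (hm : m ∈ (Zb.repr x).support) :
    (m : WithBot Γ) ≤ val Zb x := Finset.le_max hm

lemma val_mul {c : Γ → Γ → ℂ} (hc : ∀ k l, c k l ≠ 0)
    (hmul : ∀ k l, Zb k * Zb l = c k l • Zb (k + l))
    {x y : B} {k₀ l₀ : Γ} (hvx : val Zb x = (k₀ : WithBot Γ)) (hvy : val Zb y = (l₀ : WithBot Γ)) :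
    val Zb (x * y) = ((k₀ + l₀ : Γ) : WithBot Γ) := by
  set a := Zb.repr x with ha
  set b := Zb.repr y with hb
  have hk₀ : k₀ ∈ a.support := Finset.mem_of_max hvx
  have hl₀ : l₀ ∈ b.support := Finset.mem_of_max hvy
  have hka : ∀ k ∈ a.support, k ≤ k₀ := fun k hk => by
    have := le_val_of_mem_support Zb (x := x) hk
    rw [hvx] at this; exact_mod_cast this
  have hlb : ∀ l ∈ b.support, l ≤ l₀ := fun l hl => by
    have := le_val_of_mem_support Zb (x := y) hl
    rw [hvy] at this; exact_mod_cast this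
  have hxy : x * y = ∑ k ∈ a.support, ∑ l ∈ b.support, (a k * b l * c k l) • Zb (k + l) := by
    have hx' : x = a.sum fun k ak => ak • Zb k := by
      rw [← Zb.linearCombination_repr x, Finsupp.linearCombination_apply]
    have hy' : y = b.sum fun l bl => bl • Zb l := by
      rw [← Zb.linearCombination_repr y, Finsupp.linearCombination_apply]
    conv_lhs => rw [hx', hy']
    rw [Finsupp.sum, Finsupp.sum, Finset.sum_mul]
    refine Finset.sum_congr rfl fun k hk => ?_
    rw [Finset.mul_sum]
    refine Finset.sum_congr rfl fun l hl => ?_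
    rw [smul_mul_assoc, mul_smul_comm, hmul, smul_smul, smul_smul, mul_assoc]
  have hrepr : ∀ m : Γ, Zb.repr (x * y) m =
      ∑ k ∈ a.support, ∑ l ∈ b.support, (a k * b l * c k l) * (if k + l = m then 1 else 0) := by
    intro m
    rw [hxy, map_sum]
    rw [Finsupp.finset_sum_apply]
    refine Finset.sum_congr rfl fun k hk => ?_
    rw [map_sum, Finsupp.finset_sum_apply]
    refine Finset.sum_congr rfl fun l hl => ?_
    rw [map_smul, Finsupp.smul_apply, Zb.repr_self, Finsupp.single_apply]
    simp [mul_ite]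
  have htop : Zb.repr (x * y) (k₀ + l₀) = a k₀ * b l₀ * c k₀ l₀ := by
    rw [hrepr]
    rw [Finset.sum_eq_single k₀]
    · rw [Finset.sum_eq_single l₀]
      · simp
      · intro l hl hne
        have : l < l₀ := lt_of_le_of_ne (hlb l hl) hne
        have hne' : k₀ + l ≠ k₀ + l₀ := by
          intro h; exact absurd (add_left_cancel h) hne
        simp [hne']
      · intro h; exact absurd hl₀ h
    · intro k hk hne
      have hklt : k < k₀ := lt_of_le_of_ne (hka k hk) hne
      refine Finset.sum_eq_zero fun l hl => ?_
      have : k + l < k₀ + l₀ := add_lt_add_of_lt_of_le hklt (hlb l hl)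
      have hne' : k + l ≠ k₀ + l₀ := ne_of_lt this
      simp [hne']
    · intro h; exact absurd hk₀ h
  have hmem : k₀ + l₀ ∈ (Zb.repr (x * y)).support := by
    rw [Finsupp.mem_support_iff, htop]
    exact mul_ne_zero (mul_ne_zero (Finsupp.mem_support_iff.mp hk₀)
      (Finsupp.mem_support_iff.mp hl₀)) (hc k₀ l₀)
  have hbound : ∀ m ∈ (Zb.repr (x * y)).support, m ≤ k₀ + l₀ := by
    intro m hm
    by_contra h
    push_neg at h
    have hmz : Zb.repr (x * y) m = 0 := by
      rw [hrepr]
      refine Finset.sum_eq_zero fun k hk => Finset.sum_eq_zero fun l hl => ?_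
      have : k + l < m := lt_of_le_of_lt (add_le_add (hka k hk) (hlb l hl)) h
      simp [ne_of_lt this]
    exact Finsupp.mem_support_iff.mp hm hmz
  refine le_antisymm (Finset.max_le fun m hm => WithBot.coe_le_coe.mpr (hbound m hm))
    (Finset.le_max hmem)

end aux

/-- With `B` a quantum torus over `ℂ` with basis `(Z k)_{k ∈ Γ}` indexed by a
linearly ordered additive group `Γ`, let `Γ⁰ ≤ Γ` be a subgroup, `ZA ⊆ B` a `ℂ`-subalgebra all
of whose nonzero elements have valuation in `Γ⁰`, and `x 1, …, x R` nonzero elements of `B`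
whose valuations lie in pairwise distinct cosets of `Γ⁰`.  Then the `x i` are left linearly
independent over `ZA`: any relation `∑ z i * x i = 0` with `z i ∈ ZA` forces all `z i = 0`. -/
theorem left_linear_independence_of_distinct_cosets {Γ : Type*} [AddCommGroup Γ] [LinearOrder Γ] [IsOrderedAddMonoid Γ]
    {B : Type*} [Ring B] [Algebra ℂ B] (Zb : Module.Basis Γ ℂ B)
    (c : Γ → Γ → ℂ) (hc : ∀ k l, c k l ≠ 0)
    (hmul : ∀ k l, Zb k * Zb l = c k l • Zb (k + l))
    (Γ0 : AddSubgroup Γ)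
    (ZA : Subalgebra ℂ B)
    (hZA : ∀ z ∈ ZA, z ≠ 0 → ∃ g ∈ Γ0, val Zb z = (g : WithBot Γ))
    (R : ℕ) (x : Fin R → B) (hx : ∀ i, x i ≠ 0)
    (hdist : ∀ i j : Fin R, i ≠ j → ∀ gi gj : Γ,
      val Zb (x i) = (gi : WithBot Γ) → val Zb (x j) = (gj : WithBot Γ) → gi - gj ∉ Γ0)
    (z : Fin R → B) (hz : ∀ i, z i ∈ ZA)
    (hsum : ∑ i, z i * x i = 0) :
    ∀ i, z i = 0 := by
  classical
  by_contra h
  push_neg at h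
  obtain ⟨j, hj⟩ := h
  set S : Finset (Fin R) := Finset.univ.filter (fun i => z i ≠ 0) with hS
  have hSne : S.Nonempty := ⟨j, by simp [hS, hj]⟩
  obtain ⟨i₀, hi₀S, hi₀max⟩ := S.exists_max_image (fun i => val Zb (z i * x i)) hSne
  have hzi₀ : z i₀ ≠ 0 := (Finset.mem_filter.mp hi₀S).2
  -- valuation data for an arbitrary element of S
  have hval : ∀ i ∈ S, ∃ g ∈ Γ0, ∃ v : Γ, val Zb (x i) = (v : WithBot Γ) ∧
      val Zb (z i * x i) = ((g + v : Γ) : WithBot Γ) := by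
    intro i hiS
    have hzi : z i ≠ 0 := (Finset.mem_filter.mp hiS).2
    obtain ⟨g, hg, hvg⟩ := hZA (z i) (hz i) hzi
    obtain ⟨v, hv⟩ := WithBot.ne_bot_iff_exists.mp (val_ne_bot_of_ne_zero Zb (hx i))
    exact ⟨g, hg, v, hv.symm, val_mul Zb hc hmul hvg hv.symm⟩
  obtain ⟨g₀, hg₀, v₀, hv₀, hval₀⟩ := hval i₀ hi₀S
  set m₀ : Γ := g₀ + v₀ with hm₀
  -- other terms in S have strictly smaller valuation
  have hlt : ∀ i ∈ S, i ≠ i₀ → val Zb (z i * x i) < (m₀ : WithBot Γ) := by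
    intro i hiS hne
    obtain ⟨g, hg, v, hv, hvali⟩ := hval i hiS
    have hle : val Zb (z i * x i) ≤ (m₀ : WithBot Γ) := by
      rw [← hval₀]; exact hi₀max i hiS
    refine lt_of_le_of_ne hle ?_
    rw [hvali]
    intro heq
    have heq' : g + v = m₀ := by exact_mod_cast heq
    have : v - v₀ = g₀ - g := by rw [hm₀] at heq'; rw [sub_eq_sub_iff_add_eq_add, add_comm v g, heq']
    exact hdist i i₀ hne v v₀ hv hv₀ (this ▸ sub_mem hg₀ hg)
  -- the coefficient of the sum at m₀ is the (nonzero) coefficient of the i₀ term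
  have hcoef : Zb.repr (∑ i, z i * x i) m₀ = Zb.repr (z i₀ * x i₀) m₀ := by
    rw [map_sum, Finsupp.finset_sum_apply]
    refine Finset.sum_eq_single i₀ (fun i _ hne => ?_) (fun h => absurd (Finset.mem_univ i₀) h)
    by_cases hiS : i ∈ S
    · have := hlt i hiS hne
      by_contra hc0
      have hmem : m₀ ∈ (Zb.repr (z i * x i)).support := Finsupp.mem_support_iff.mpr hc0
      have := lt_of_le_of_lt (le_val_of_mem_support Zb hmem) this
      exact absurd this (lt_irrefl _)
    · have : z i = 0 := by
        by_contra hzi; exact hiS (Finset.mem_filter.mpr ⟨Finset.mem_univ i, hzi⟩)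
      simp [this]
  have hne0 : Zb.repr (z i₀ * x i₀) m₀ ≠ 0 :=
    Finsupp.mem_support_iff.mp (Finset.mem_of_max hval₀)
  rw [hsum] at hcoef
  simp at hcoef
  exact hne0 hcoef.symm
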